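/- arXiv:1512.05417 — 2 statements merged into one kernel-verified Lean document; each statement's English description precedes it below -/
import Mathlib

section
/- The functions ρ_0, …, ρ_K defined by the explicit recursion solve the Fokker–Planck system: for all t > 0, ρ_0'(t) = −q_0(t) ρ_0(t); ρ_k'(t) = q_{k−1}(t) ρ_{k−1}(t) − q_k(t) ρ_k(t) for every 0 < k < K; and ρ_K'(t) = q_{K−1}(t) ρ_{K−1}(t); moreover ρ_0(0) = 1 and ρ_k(0) = 0 for every k ≥ 1. -/
open MeasureTheory

open intervalIntegral


lemma primDeriv {h : ℝ → ℝ} (hc : Continuous h) (t : ℝ) :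
    HasDerivAt (fun x => ∫ s in (0:ℝ)..x, h s) (h t) t :=
  integral_hasDerivAt_right (hc.intervalIntegrable _ _)
    (hc.aestronglyMeasurable.stronglyMeasurableAtFilter) hc.continuousAt

lemma primCont {h : ℝ → ℝ} (hc : Continuous h) :
    Continuous (fun x => ∫ s in (0:ℝ)..x, h s) := by
  rw [continuous_iff_continuousAt]
  exact fun t => (primDeriv hc t).continuousAt


/-- The recursively defined probabilities `ρ_k` from the Fokker–Planck solution formula:
`ρ_0(t) = exp(-∫_0^t g_0)`, `ρ_{k+1}(t) = ∫_0^t ρ_k(s) g_k(s) exp(-∫_s^t g_{k+1}) ds`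
for `k+1 < K`, and `ρ_K(t) = ∫_0^t ρ_{K-1}(s) g_{K-1}(s) ds`. -/
noncomputable def rho (K : ℕ) (g : ℕ → ℝ → ℝ) : ℕ → ℝ → ℝ
  | 0 => fun t => Real.exp (-(∫ s in (0:ℝ)..t, g 0 s))
  | (k+1) => fun t =>
      if k + 1 = K then ∫ s in (0:ℝ)..t, rho K g k s * g k s
      else ∫ s in (0:ℝ)..t, rho K g k s * g k s * Real.exp (-(∫ u in s..t, g (k+1) u))

lemma rho_succ_eq {K k : ℕ} {g : ℕ → ℝ → ℝ} (hc : Continuous (g (k+1)))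
    (hne : ¬ (k + 1 = K)) :
    rho K g (k+1) = fun t => Real.exp (-(∫ s in (0:ℝ)..t, g (k+1) s)) *
      ∫ s in (0:ℝ)..t, rho K g k s * g k s * Real.exp (∫ u in (0:ℝ)..s, g (k+1) u) := by
  funext t
  rw [show rho K g (k+1) t
      = ∫ s in (0:ℝ)..t, rho K g k s * g k s * Real.exp (-(∫ u in s..t, g (k+1) u)) from by
    simp [rho, hne]]
  rw [← intervalIntegral.integral_const_mul]
  apply intervalIntegral.integral_congr
  intro s _
  dsimp only
  have h1 : (∫ u in s..t, g (k+1) u)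
      = (∫ u in (0:ℝ)..t, g (k+1) u) - ∫ u in (0:ℝ)..s, g (k+1) u :=
    (integral_interval_sub_left (hc.intervalIntegrable _ _) (hc.intervalIntegrable _ _)).symm
  rw [h1, neg_sub, Real.exp_sub, Real.exp_neg]
  ring

lemma rho_cont {K : ℕ} {g : ℕ → ℝ → ℝ} (hK : 1 ≤ K)
    (hg : ∀ k, k < K → Continuous (g k)) :
    ∀ k, k ≤ K → Continuous (rho K g k) := by
  intro k
  induction k with
  | zero =>
    intro _
    exact Real.continuous_exp.comp (primCont (hg 0 hK)).neg
  | succ k ih =>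
    intro hkK
    have hk : k < K := lt_of_lt_of_le (Nat.lt_succ_self k) hkK
    have ihc := ih hk.le
    by_cases hne : k + 1 = K
    · have : rho K g (k+1) = fun t => ∫ s in (0:ℝ)..t, rho K g k s * g k s := by
        funext t; simp [rho, hne]
      rw [this]
      exact primCont (ihc.mul (hg k hk))
    · have hck : Continuous (g (k+1)) := hg (k+1) (lt_of_le_of_ne hkK hne)
      rw [rho_succ_eq hck hne]
      exact (Real.continuous_exp.comp (primCont hck).neg).mul
        (primCont ((ihc.mul (hg k hk)).mul
          (Real.continuous_exp.comp (primCont hck))))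

lemma rho_deriv_mid {K k : ℕ} {g : ℕ → ℝ → ℝ} (hK : 1 ≤ K)
    (hg : ∀ j, j < K → Continuous (g j)) (hk : k + 1 < K) (t : ℝ) :
    HasDerivAt (rho K g (k+1))
      (g k t * rho K g k t - g (k+1) t * rho K g (k+1) t) t := by
  have hck : Continuous (g (k+1)) := hg (k+1) hk
  have hne : ¬ (k + 1 = K) := Nat.ne_of_lt hk
  set A : ℝ → ℝ := fun x => ∫ s in (0:ℝ)..x, g (k+1) s with hA
  set h : ℝ → ℝ := fun s => rho K g k s * g k s * Real.exp (A s) with hh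
  have hhc : Continuous h :=
    ((rho_cont hK hg k (le_of_lt (Nat.lt_of_succ_lt hk))).mul
      (hg k (Nat.lt_of_succ_lt hk))).mul (Real.continuous_exp.comp (primCont hck))
  have hE : HasDerivAt (fun x => Real.exp (-A x)) (Real.exp (-A t) * (-(g (k+1) t))) t :=
    ((primDeriv hck t).neg).exp
  have hH : HasDerivAt (fun x => ∫ s in (0:ℝ)..x, h s) (h t) t := primDeriv hhc t
  have hprod : HasDerivAt (fun x => Real.exp (-A x) * ∫ s in (0:ℝ)..x, h s) _ t := hE.mul hH
  have heq := rho_succ_eq (K := K) hck hne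
  rw [← heq] at hprod
  convert hprod using 1
  have hrt : rho K g (k+1) t
      = Real.exp (-A t) * ∫ s in (0:ℝ)..t, h s := by rw [heq]
  rw [hrt]
  simp only [hh]
  have he : Real.exp (-A t) * Real.exp (A t) = 1 := by
    rw [← Real.exp_add]; simp
  have key : Real.exp (-A t) * (rho K g k t * g k t * Real.exp (A t))
      = g k t * rho K g k t := by
    rw [show Real.exp (-A t) * (rho K g k t * g k t * Real.exp (A t))
        = Real.exp (-A t) * Real.exp (A t) * (rho K g k t * g k t) from by ring, he]
    ring
  linear_combination -key

/-- The recursively defined `ρ_0, …, ρ_K` solve the Fokker–Planck system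
`ρ_0' = -q_0 ρ_0`, `ρ_k' = q_{k-1} ρ_{k-1} - q_k ρ_k` (0 < k < K), `ρ_K' = q_{K-1} ρ_{K-1}`
for all `t > 0`, with initial data `ρ_0(0) = 1` and `ρ_k(0) = 0` for `k ≥ 1`. -/
theorem rho_solves_fokker_planck (K : ℕ) (hK : 1 ≤ K) (q : ℕ → ℝ → ℝ)
    (hq : ∀ k, k < K → Continuous (q k)) :
    (∀ t : ℝ, 0 < t →
        HasDerivAt (rho K q 0) (-(q 0 t) * rho K q 0 t) t) ∧
    (∀ k : ℕ, 0 < k → k < K → ∀ t : ℝ, 0 < t →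
        HasDerivAt (rho K q k)
          (q (k-1) t * rho K q (k-1) t - q k t * rho K q k t) t) ∧
    (∀ t : ℝ, 0 < t →
        HasDerivAt (rho K q K) (q (K-1) t * rho K q (K-1) t) t) ∧
    rho K q 0 0 = 1 ∧
    (∀ k : ℕ, 1 ≤ k → k ≤ K → rho K q k 0 = 0) := by
  refine ⟨?_, ?_, ?_, ?_, ?_⟩
  · intro t _
    have h : HasDerivAt (fun x => Real.exp (-(∫ s in (0:ℝ)..x, q 0 s)))
        (Real.exp (-(∫ s in (0:ℝ)..t, q 0 s)) * -q 0 t) t := ((primDeriv (hq 0 hK) t).neg).exp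
    have : rho K q 0 = fun x => Real.exp (-(∫ s in (0:ℝ)..x, q 0 s)) := rfl
    rw [this]
    convert h using 1
    ring
  · rintro (_ | k) hk0 hkK t _
    · exact absurd hk0 (lt_irrefl 0)
    · simpa using rho_deriv_mid hK hq hkK t
  · intro t _
    obtain ⟨k, rfl⟩ : ∃ k, K = k + 1 := ⟨K - 1, (Nat.succ_pred_eq_of_pos hK).symm⟩
    have hk : k < k + 1 := Nat.lt_succ_self k
    have : rho (k+1) q (k+1) = fun x => ∫ s in (0:ℝ)..x, rho (k+1) q k s * q k s := by
      funext x; simp [rho]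
    rw [this]
    have := primDeriv (((rho_cont hK hq k hk.le).mul (hq k hk))) t
    simpa [mul_comm] using this
  · simp [rho]
  · rintro (_ | k) hk0 hkK
    · exact absurd hk0 (by norm_num)
    · by_cases hne : k + 1 = K <;> simp [rho, hne]
end

section
/- (Influence error, multiplicative bound.) Let ε ∈ (0, 1), let ρ_0, …, ρ_K be defined by the recursion with the rates q_0, …, q_{K−1}, and ρ̂_0, …, ρ̂_K by the recursion with the rates q̂_0, …, q̂_{K−1}, with influences μ(t) = Σ_{k=0}^K k ρ_k(t) and μ̂(t) = Σ_{k=0}^K k ρ̂_k(t). Suppose all rates are strictly positive and for every k = 0, …, K−1 there is q̄_k > 0 with q_k(t) ≤ q̄_k for all t ≥ 0 such that |q̂_k(t) − q_k(t)| / q_k(t) ≤ min{ log(1 + ε/2) / (q̄_k t), ε / (2 + ε) } for all t > 0. Then (1 − ε)^K ≤ μ̂(t) / μ(t) ≤ (1 + ε)^K for every t > 0, and consequently |μ̂(t) − μ(t)| / μ(t) ≤ (1 + ε)^K − 1 for every t > 0. -/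
open MeasureTheory

/-- The influence `μ(t) = Σ_{k=0}^K k ρ_k(t)` associated with the rate family `g`. -/
noncomputable def influence (K : ℕ) (g : ℕ → ℝ → ℝ) (t : ℝ) : ℝ :=
  ∑ k ∈ Finset.range (K + 1), (k : ℝ) * rho K g k t

namespace InfluenceAux
open MeasureTheory



noncomputable def Qi (g : ℝ → ℝ) (t : ℝ) : ℝ := ∫ s in (0:ℝ)..t, g s

lemma Qi_hasDerivAt {g : ℝ → ℝ} (hg : Continuous g) (t : ℝ) :
    HasDerivAt (Qi g) (g t) t :=
  intervalIntegral.integral_hasDerivAt_right (hg.intervalIntegrable _ _)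
    (hg.stronglyMeasurableAtFilter _ _) hg.continuousAt

lemma Qi_continuous {g : ℝ → ℝ} (hg : Continuous g) : Continuous (Qi g) :=
  continuous_iff_continuousAt.2 fun t => (Qi_hasDerivAt hg t).differentiableAt.continuousAt

/-- Two functions with equal derivatives and equal value at 0 agree. -/
lemma funeq_of_deriv {f g f' : ℝ → ℝ} (hf : ∀ t, HasDerivAt f (f' t) t)
    (hg : ∀ t, HasDerivAt g (f' t) t) (h0 : f 0 = g 0) (t : ℝ) : f t = g t := by
  have hd : Differentiable ℝ (fun t => f t - g t) :=
    fun x => ((hf x).sub (hg x)).differentiableAt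
  have hz : ∀ x : ℝ, deriv (fun t => f t - g t) x = 0 := by
    intro x
    rw [show (fun t => f t - g t) = f - g from rfl, ((hf x).sub (hg x)).deriv]
    ring
  have := is_const_of_deriv_eq_zero hd hz t 0
  linarith

/-- A function vanishing at 0 with nonneg derivative on `[0,∞)` is monotone there. -/
lemma monoOn_of_deriv {f f' : ℝ → ℝ} (hf : ∀ t, HasDerivAt f (f' t) t)
    (hd : ∀ t, 0 ≤ t → 0 ≤ f' t) : MonotoneOn f (Set.Ici (0:ℝ)) := by
  apply monotoneOn_of_deriv_nonneg (convex_Ici 0)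
  · exact Continuous.continuousOn
      (continuous_iff_continuousAt.2 fun t => (hf t).differentiableAt.continuousAt)
  · intro x hx
    exact ((hf x).differentiableAt).differentiableWithinAt
  · intro x hx
    rw [interior_Ici] at hx
    rw [(hf x).deriv]
    exact hd x (le_of_lt hx)

lemma nonneg_of_deriv {f f' : ℝ → ℝ} (hf : ∀ t, HasDerivAt f (f' t) t) (h0 : f 0 = 0)
    (hd : ∀ t, 0 ≤ t → 0 ≤ f' t) : ∀ t, 0 ≤ t → 0 ≤ f t := by
  intro t ht
  have := monoOn_of_deriv hf hd (Set.self_mem_Ici) ht ht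
  linarith

/-- Core scalar inequality: `e^{ηx} - 1 ≤ ε (e^x - 1)` for `η = ε/(2+ε)`, `x ≥ 0`. -/
lemma exp_eta_le {ε : ℝ} (hε : 0 < ε) (hε1 : ε < 1) {x : ℝ} (hx : 0 ≤ x) :
    Real.exp (ε / (2 + ε) * x) - 1 ≤ ε * (Real.exp x - 1) := by
  set η := ε / (2 + ε) with hηdef
  have h2ε : (0:ℝ) < 2 + ε := by linarith
  have hη0 : 0 ≤ η := by positivity
  have hηε : η ≤ ε := by
    rw [hηdef, div_le_iff₀ h2ε]; nlinarith
  have hη1 : η ≤ 1 := by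
    rw [hηdef, div_le_one h2ε]; linarith
  set φ : ℝ → ℝ := fun u => ε * (Real.exp u - 1) - (Real.exp (η * u) - 1) with hφ
  have hder : ∀ u : ℝ, HasDerivAt φ (ε * Real.exp u - η * Real.exp (η * u)) u := by
    intro u
    have h1 : HasDerivAt (fun u : ℝ => Real.exp u) (Real.exp u) u := Real.hasDerivAt_exp u
    have h2 : HasDerivAt (fun u : ℝ => η * u) η u := by
      simpa using (hasDerivAt_id u).const_mul η
    have h3 : HasDerivAt (fun u : ℝ => Real.exp (η * u)) (Real.exp (η * u) * η) u := h2.exp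
    have := ((h1.sub_const 1).const_mul ε).sub (h3.sub_const 1)
    refine this.congr_deriv (Eq.symm ?_)
    ring
  have hmono : MonotoneOn φ (Set.Ici (0:ℝ)) := by
    apply monoOn_of_deriv hder
    intro u hu
    have e1 : Real.exp (η * u) ≤ Real.exp u := by
      apply Real.exp_le_exp.2; nlinarith
    have e2 : η * Real.exp (η * u) ≤ ε * Real.exp (η * u) :=
      mul_le_mul_of_nonneg_right hηε (le_of_lt (Real.exp_pos _))
    nlinarith [Real.exp_pos (η * u)]
  have := hmono (Set.self_mem_Ici) hx hx
  simp only [hφ, mul_zero, Real.exp_zero] at this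
  linarith

/-- The key pointwise bound: if `|y - x| ≤ η x` then `|e^{-y} - e^{-x}| ≤ ε (1 - e^{-x})`. -/
lemma key_abs {ε : ℝ} (hε : 0 < ε) (hε1 : ε < 1) {x y : ℝ} (hx : 0 ≤ x)
    (hy : |y - x| ≤ ε / (2 + ε) * x) :
    |Real.exp (-y) - Real.exp (-x)| ≤ ε * (1 - Real.exp (-x)) := by
  set η := ε / (2 + ε) with hηdef
  have hyx := abs_le.mp hy
  have hcore : Real.exp (η * x) - 1 ≤ ε * (Real.exp x - 1) := exp_eta_le hε hε1 hx
  have hex : Real.exp (-x) * Real.exp x = 1 := by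
    rw [← Real.exp_add]; simp
  have hexpos := Real.exp_pos (-x)
  rw [abs_le]
  constructor
  · -- e^{-x} - e^{-y} ≤ ε(1 - e^{-x}) ;  y ≤ (1+η)x
    have e1 : Real.exp (-((1 + η) * x)) ≤ Real.exp (-y) := by
      apply Real.exp_le_exp.2; linarith
    have e2 : Real.exp (-((1 + η) * x)) = Real.exp (-x) * Real.exp (-(η * x)) := by
      rw [← Real.exp_add]; ring_nf
    -- 1 - e^{-ηx} ≤ e^{ηx} - 1, both via add_one_le_exp
    have e3 : 1 - Real.exp (-(η * x)) ≤ η * x := by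
      have := Real.add_one_le_exp (-(η * x)); linarith
    have e4 : η * x ≤ Real.exp (η * x) - 1 := by
      have := Real.add_one_le_exp (η * x); linarith
    nlinarith
  · -- e^{-y} - e^{-x} ≤ ε(1 - e^{-x}) ;  y ≥ (1-η)x
    have e1 : Real.exp (-y) ≤ Real.exp (-((1 - η) * x)) := by
      apply Real.exp_le_exp.2; linarith
    have e2 : Real.exp (-((1 - η) * x)) = Real.exp (-x) * Real.exp (η * x) := by
      rw [← Real.exp_add]; ring_nf
    nlinarith


/-- interval integral from s to t as difference of Qi -/
lemma integral_eq_Qi_sub {g : ℝ → ℝ} (hg : Continuous g) (s t : ℝ) :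
    (∫ u in s..t, g u) = Qi g t - Qi g s := by
  have h1 := intervalIntegral.integral_add_adjacent_intervals (μ := volume)
    (hg.intervalIntegrable 0 s) (hg.intervalIntegrable s t)
  simp only [Qi]
  linarith

noncomputable def Ff (g : ℕ → ℝ → ℝ) : ℕ → ℝ → ℝ
  | 0 => fun t => 1 - Real.exp (-(Qi (g 0) t))
  | (j+1) => fun t =>
      ∫ s in (0:ℝ)..t, Ff g j s * g (j+1) s * Real.exp (-(∫ u in s..t, g (j+1) u))

noncomputable def Fd (g : ℕ → ℝ → ℝ) : ℕ → ℝ → ℝ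
  | 0 => fun t => g 0 t * Real.exp (-(Qi (g 0) t))
  | (j+1) => fun t => g (j+1) t * (Ff g j t - Ff g (j+1) t)

lemma Ff_zero_eq (g : ℕ → ℝ → ℝ) (t : ℝ) : Ff g 0 t = 1 - Real.exp (-(Qi (g 0) t)) := rfl

/-- canonical "pulled-out" form -/
lemma Ff_succ_eq (g : ℕ → ℝ → ℝ) (j : ℕ) (hg : Continuous (g (j+1))) (t : ℝ) :
    Ff g (j+1) t =
      (∫ s in (0:ℝ)..t, Ff g j s * g (j+1) s * Real.exp (Qi (g (j+1)) s)) *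
        Real.exp (-(Qi (g (j+1)) t)) := by
  show (∫ s in (0:ℝ)..t, Ff g j s * g (j+1) s * Real.exp (-(∫ u in s..t, g (j+1) u))) = _
  rw [← intervalIntegral.integral_mul_const]
  apply intervalIntegral.integral_congr
  intro s hs
  beta_reduce
  rw [integral_eq_Qi_sub hg]
  rw [show -(Qi (g (j+1)) t - Qi (g (j+1)) s) = Qi (g (j+1)) s + -(Qi (g (j+1)) t) by ring,
    Real.exp_add]
  ring

/-- integral form with difference exponents -/
lemma Ff_succ_eq' (g : ℕ → ℝ → ℝ) (j : ℕ) (hg : Continuous (g (j+1))) (t : ℝ) :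
    Ff g (j+1) t =
      ∫ s in (0:ℝ)..t, Ff g j s * g (j+1) s * Real.exp (-(Qi (g (j+1)) t - Qi (g (j+1)) s)) := by
  show (∫ s in (0:ℝ)..t, Ff g j s * g (j+1) s * Real.exp (-(∫ u in s..t, g (j+1) u))) = _
  apply intervalIntegral.integral_congr
  intro s hs
  beta_reduce
  rw [integral_eq_Qi_sub hg]

/-- Master structure lemma. -/
lemma Ff_struct (g : ℕ → ℝ → ℝ) : ∀ j : ℕ, (∀ k, k ≤ j → Continuous (g k)) →
    Continuous (Ff g j) ∧ Ff g j 0 = 0 ∧ (∀ t, HasDerivAt (Ff g j) (Fd g j t) t) ∧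
      Continuous (Fd g j) := by
  intro j
  induction j with
  | zero =>
    intro hg
    have hg0 := hg 0 le_rfl
    have hQc := Qi_continuous hg0
    have hc : Continuous (Ff g 0) := by
      simp only [Ff]
      continuity
    refine ⟨hc, ?_, ?_, ?_⟩
    · simp [Ff, Qi]
    · intro t
      have h1 : HasDerivAt (fun t => Real.exp (-(Qi (g 0) t)))
          (Real.exp (-(Qi (g 0) t)) * (-(g 0 t))) t := (Qi_hasDerivAt hg0 t).neg.exp
      have := (hasDerivAt_const t (1:ℝ)).sub h1
      have h2 : HasDerivAt (Ff g 0) (0 - Real.exp (-(Qi (g 0) t)) * (-(g 0 t))) t := this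
      convert h2 using 1
      simp only [Fd]; ring
    · simp only [Fd]
      continuity
  | succ j ih =>
    intro hg
    have hgj : ∀ k, k ≤ j → Continuous (g k) := fun k hk => hg k (le_trans hk (Nat.le_succ j))
    obtain ⟨hFc, hF0, hFd, hFdc⟩ := ih hgj
    have hgs := hg (j+1) le_rfl
    have hQc := Qi_continuous hgs
    set Q := Qi (g (j+1)) with hQ
    set ψ : ℝ → ℝ := fun s => Ff g j s * g (j+1) s * Real.exp (Q s) with hψ
    have hψc : Continuous ψ := by continuity
    set P : ℝ → ℝ := fun t => ∫ s in (0:ℝ)..t, ψ s with hP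
    have hPd : ∀ t, HasDerivAt P (ψ t) t := fun t =>
      intervalIntegral.integral_hasDerivAt_right (hψc.intervalIntegrable _ _)
        (hψc.stronglyMeasurableAtFilter _ _) hψc.continuousAt
    have hPc : Continuous P :=
      continuous_iff_continuousAt.2 fun t => (hPd t).differentiableAt.continuousAt
    have heq : ∀ t, Ff g (j+1) t = P t * Real.exp (-(Q t)) := fun t => Ff_succ_eq g j hgs t
    have heqf : Ff g (j+1) = fun t => P t * Real.exp (-(Q t)) := funext heq
    have hc : Continuous (Ff g (j+1)) := by rw [heqf]; continuity
    refine ⟨hc, ?_, ?_, ?_⟩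
    · rw [heq 0]
      simp [hP]
    · intro t
      have hE : HasDerivAt (fun t => Real.exp (-(Q t))) (Real.exp (-(Q t)) * (-(g (j+1) t))) t :=
        (Qi_hasDerivAt hgs t).neg.exp
      have h2 : HasDerivAt (fun t => P t * Real.exp (-(Q t)))
          (ψ t * Real.exp (-(Q t)) + P t * (Real.exp (-(Q t)) * (-(g (j+1) t)))) t :=
        (hPd t).mul hE
      rw [← heqf] at h2
      convert h2 using 1
      simp only [Fd, hψ]
      rw [heq t]
      have : Real.exp (Q t) * Real.exp (-(Q t)) = 1 := by
        rw [← Real.exp_add]; simp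
      linear_combination (-(Ff g j t * g (j + 1) t)) * this
    · simp only [Fd]
      exact (hg (j+1) le_rfl).mul (hFc.sub hc)




lemma Fd_nonneg (g : ℕ → ℝ → ℝ) : ∀ j : ℕ, (∀ k, k ≤ j → Continuous (g k)) →
    (∀ k, k ≤ j → ∀ t, 0 ≤ t → 0 ≤ g k t) → ∀ t, 0 ≤ t → 0 ≤ Fd g j t := by
  intro j
  induction j with
  | zero =>
    intro _ hpos t ht
    exact mul_nonneg (hpos 0 le_rfl t ht) (le_of_lt (Real.exp_pos _))
  | succ j ih =>
    intro hg hpos t ht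
    have hgj : ∀ k, k ≤ j → Continuous (g k) := fun k hk => hg k (le_trans hk (Nat.le_succ j))
    have hposj : ∀ k, k ≤ j → ∀ t, 0 ≤ t → 0 ≤ g k t :=
      fun k hk => hpos k (le_trans hk (Nat.le_succ j))
    obtain ⟨hFc, hF0, hFdj, hFdc⟩ := Ff_struct g j hgj
    obtain ⟨hFc1, hF01, hFd1, hFdc1⟩ := Ff_struct g (j+1) hg
    have hgs := hg (j+1) le_rfl
    set Q := Qi (g (j+1)) with hQ
    set E : ℝ → ℝ := fun t => Real.exp (Q t) * (Ff g j t - Ff g (j+1) t) with hE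
    have hEd : ∀ u, HasDerivAt E (Real.exp (Q u) * Fd g j u) u := by
      intro u
      have h1 : HasDerivAt (fun u => Real.exp (Q u)) (Real.exp (Q u) * g (j+1) u) u :=
        (Qi_hasDerivAt hgs u).exp
      have h2 := h1.mul ((hFdj u).sub (hFd1 u))
      refine h2.congr_deriv (Eq.symm ?_)
      simp only [Fd, Pi.sub_apply]
      ring
    have hEnn : ∀ u, 0 ≤ u → 0 ≤ E u := by
      apply nonneg_of_deriv hEd
      · simp [hE, hF0, hF01]
      · intro u hu
        exact mul_nonneg (le_of_lt (Real.exp_pos _)) (ih hgj hposj u hu)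
    have hle : Ff g (j+1) t ≤ Ff g j t := by
      have h := hEnn t ht
      simp only [hE] at h
      nlinarith [Real.exp_pos (Q t)]
    show 0 ≤ g (j+1) t * (Ff g j t - Ff g (j+1) t)
    exact mul_nonneg (hpos (j+1) le_rfl t ht) (by linarith)

lemma Ff_nonneg (g : ℕ → ℝ → ℝ) (j : ℕ) (hg : ∀ k, k ≤ j → Continuous (g k))
    (hpos : ∀ k, k ≤ j → ∀ t, 0 ≤ t → 0 ≤ g k t) : ∀ t, 0 ≤ t → 0 ≤ Ff g j t := by
  obtain ⟨hFc, hF0, hFd, hFdc⟩ := Ff_struct g j hg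
  exact nonneg_of_deriv hFd hF0 (Fd_nonneg g j hg hpos)

/-- The main comparison induction. -/
lemma comparison (ε : ℝ) (hε : 0 < ε) (hε1 : ε < 1) (q qhat : ℕ → ℝ → ℝ) :
    ∀ j : ℕ, (∀ k, k ≤ j → Continuous (q k)) → (∀ k, k ≤ j → Continuous (qhat k)) →
    (∀ k, k ≤ j → ∀ t, 0 ≤ t → 0 ≤ q k t) → (∀ k, k ≤ j → ∀ t, 0 ≤ t → 0 ≤ qhat k t) →
    (∀ k, k ≤ j → ∀ u, 0 ≤ u → |qhat k u - q k u| ≤ ε / (2 + ε) * q k u) →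
    ∀ t, 0 ≤ t →
      (1 - ε) ^ (j+1) * Ff q j t ≤ Ff qhat j t ∧
        Ff qhat j t ≤ (1 + ε) ^ (j+1) * Ff q j t := by
  intro j
  induction j with
  | zero =>
    intro hqc hqhc hqpos hqhpos habs t ht
    have hc := hqc 0 le_rfl
    have hch := hqhc 0 le_rfl
    set x := Qi (q 0) t with hxdef
    set y := Qi (qhat 0) t with hydef
    have hx : 0 ≤ x :=
      intervalIntegral.integral_nonneg ht (fun u hu => hqpos 0 le_rfl u hu.1)
    have hxy : |y - x| ≤ ε / (2 + ε) * x := by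
      have hsub : y - x = ∫ u in (0:ℝ)..t, (qhat 0 u - q 0 u) := by
        rw [intervalIntegral.integral_sub (hch.intervalIntegrable _ _)
          (hc.intervalIntegrable _ _)]
        rfl
      rw [hsub]
      calc |∫ u in (0:ℝ)..t, (qhat 0 u - q 0 u)| ≤ ∫ u in (0:ℝ)..t, |qhat 0 u - q 0 u| :=
            intervalIntegral.abs_integral_le_integral_abs ht
        _ ≤ ∫ u in (0:ℝ)..t, ε / (2 + ε) * q 0 u := by
            apply intervalIntegral.integral_mono_on ht
            · exact ((hch.sub hc).abs).intervalIntegrable _ _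
            · exact ((continuous_const.mul hc)).intervalIntegrable _ _
            · intro u hu; exact habs 0 le_rfl u hu.1
        _ = ε / (2 + ε) * x := by rw [intervalIntegral.integral_const_mul]; rfl
    have key := key_abs hε hε1 hx hxy
    have h1 : Ff q 0 t = 1 - Real.exp (-x) := rfl
    have h2 : Ff qhat 0 t = 1 - Real.exp (-y) := rfl
    rw [abs_le] at key
    constructor
    · rw [pow_one, h1, h2]; linarith [key.1, key.2]
    · rw [pow_one, h1, h2]; linarith [key.1, key.2]
  | succ j ih =>
    intro hqc hqhc hqpos hqhpos habs t ht
    have hqcj : ∀ k, k ≤ j → Continuous (q k) := fun k hk => hqc k (le_trans hk (Nat.le_succ j))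
    have hqhcj : ∀ k, k ≤ j → Continuous (qhat k) :=
      fun k hk => hqhc k (le_trans hk (Nat.le_succ j))
    have hqposj : ∀ k, k ≤ j → ∀ t, 0 ≤ t → 0 ≤ q k t :=
      fun k hk => hqpos k (le_trans hk (Nat.le_succ j))
    have hqhposj : ∀ k, k ≤ j → ∀ t, 0 ≤ t → 0 ≤ qhat k t :=
      fun k hk => hqhpos k (le_trans hk (Nat.le_succ j))
    have habsj : ∀ k, k ≤ j → ∀ u, 0 ≤ u → |qhat k u - q k u| ≤ ε / (2 + ε) * q k u :=
      fun k hk => habs k (le_trans hk (Nat.le_succ j))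
    have IH := ih hqcj hqhcj hqposj hqhposj habsj
    obtain ⟨hwc, hw0, hwd, hwdc⟩ := Ff_struct q j hqcj
    obtain ⟨hwhc, hwh0, hwhd, hwhdc⟩ := Ff_struct qhat j hqhcj
    have hFdnn := Fd_nonneg q j hqcj hqposj
    have hwnn := Ff_nonneg q j hqcj hqposj
    have hwhnn := Ff_nonneg qhat j hqhcj hqhposj
    have hc := hqc (j+1) le_rfl
    have hch := hqhc (j+1) le_rfl
    set w := Ff q j with hwdef
    set qc := q (j+1) with hqcdef
    set qh := qhat (j+1) with hqhdef
    set v : ℝ → ℝ := fun s => Real.exp (Qi qc s - Qi qc t) with hvdef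
    set vh : ℝ → ℝ := fun s => Real.exp (Qi qh s - Qi qh t) with hvhdef
    have hvc : Continuous v := by
      apply Real.continuous_exp.comp
      exact (Qi_continuous hc).sub continuous_const
    have hvhc : Continuous vh := by
      apply Real.continuous_exp.comp
      exact (Qi_continuous hch).sub continuous_const
    have hvd : ∀ s, HasDerivAt v (v s * qc s) s := by
      intro s
      exact ((Qi_hasDerivAt hc s).sub_const (Qi qc t)).exp
    have hvhd : ∀ s, HasDerivAt vh (vh s * qh s) s := by
      intro s
      exact ((Qi_hasDerivAt hch s).sub_const (Qi qh t)).exp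
    -- pointwise key bound
    have hkey : ∀ s, s ∈ Set.Icc (0:ℝ) t → |vh s - v s| ≤ ε * (1 - v s) := by
      intro s hs
      have hst : s ≤ t := hs.2
      have hs0 : 0 ≤ s := hs.1
      set x := Qi qc t - Qi qc s with hxdef
      set y := Qi qh t - Qi qh s with hydef
      have hxint : x = ∫ u in s..t, qc u := (integral_eq_Qi_sub hc s t).symm
      have hyint : y = ∫ u in s..t, qh u := (integral_eq_Qi_sub hch s t).symm
      have hx : 0 ≤ x := by
        rw [hxint]
        exact intervalIntegral.integral_nonneg hst
          (fun u hu => hqpos (j+1) le_rfl u (le_trans hs0 hu.1))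
      have hxy : |y - x| ≤ ε / (2 + ε) * x := by
        have hsub : y - x = ∫ u in s..t, (qh u - qc u) := by
          rw [hyint, hxint, intervalIntegral.integral_sub (hch.intervalIntegrable _ _)
            (hc.intervalIntegrable _ _)]
        rw [hsub]
        calc |∫ u in s..t, (qh u - qc u)| ≤ ∫ u in s..t, |qh u - qc u| :=
              intervalIntegral.abs_integral_le_integral_abs hst
          _ ≤ ∫ u in s..t, ε / (2 + ε) * qc u := by
              apply intervalIntegral.integral_mono_on hst
              · exact ((hch.sub hc).abs).intervalIntegrable _ _
              · exact ((continuous_const.mul hc)).intervalIntegrable _ _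
              · intro u hu; exact habs (j+1) le_rfl u (le_trans hs0 hu.1)
          _ = ε / (2 + ε) * x := by
              rw [intervalIntegral.integral_const_mul, hxint]
        
      have key := key_abs hε hε1 hx hxy
      have hv : v s = Real.exp (-x) := by rw [hvdef]; simp only [hxdef]; ring_nf
      have hvh : vh s = Real.exp (-y) := by rw [hvhdef]; simp only [hydef]; ring_nf
      rw [hv, hvh]
      exact key
    -- representations
    set A : ℝ := ∫ s in (0:ℝ)..t, w s * (vh s * qh s) with hAdef
    set B : ℝ := ∫ s in (0:ℝ)..t, w s * (v s * qc s) with hBdef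
    have hrepB : Ff q (j+1) t = B := by
      rw [Ff_succ_eq' q j hc t, hBdef]
      apply intervalIntegral.integral_congr
      intro s _
      beta_reduce
      rw [show -(Qi (q (j+1)) t - Qi (q (j+1)) s) = Qi (q (j+1)) s - Qi (q (j+1)) t by ring]
      ring
    have hrepAh : Ff qhat (j+1) t = ∫ s in (0:ℝ)..t, Ff qhat j s * (vh s * qh s) := by
      rw [Ff_succ_eq' qhat j hch t]
      apply intervalIntegral.integral_congr
      intro s _
      beta_reduce
      rw [show -(Qi (qhat (j+1)) t - Qi (qhat (j+1)) s)
            = Qi (qhat (j+1)) s - Qi (qhat (j+1)) t by ring]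
      ring
    have hvt : v t = 1 := by rw [hvdef]; simp
    have hvht : vh t = 1 := by rw [hvhdef]; simp
    have hFTC : (∫ s in (0:ℝ)..t, Fd q j s) = w t := by
      have := intervalIntegral.integral_eq_sub_of_hasDerivAt (f := w) (f' := Fd q j)
        (fun x _ => hwd x) (hwdc.intervalIntegrable 0 t)
      rw [this, hw0, sub_zero]
    set IA : ℝ := ∫ s in (0:ℝ)..t, Fd q j s * vh s with hIAdef
    set IB : ℝ := ∫ s in (0:ℝ)..t, Fd q j s * v s with hIBdef
    have hIAc : Continuous (fun s => Fd q j s * vh s) := hwdc.mul hvhc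
    have hIBc : Continuous (fun s => Fd q j s * v s) := hwdc.mul hvc
    have hpartsA : A = w t - IA := by
      rw [hAdef, intervalIntegral.integral_mul_deriv_eq_deriv_mul
        (fun x _ => hwd x) (fun x _ => hvhd x)
        (hwdc.intervalIntegrable _ _) ((hvhc.mul hch).intervalIntegrable _ _),
        hvht, hw0]
      ring
    have hpartsB : B = w t - IB := by
      rw [hBdef, intervalIntegral.integral_mul_deriv_eq_deriv_mul
        (fun x _ => hwd x) (fun x _ => hvd x)
        (hwdc.intervalIntegrable _ _) ((hvc.mul hc).intervalIntegrable _ _),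
        hvt, hw0]
      ring
    -- the epsilon integral evaluation
    have heval : (∫ s in (0:ℝ)..t, Fd q j s * (ε * (1 - v s))) = ε * (w t - IB) := by
      calc (∫ s in (0:ℝ)..t, Fd q j s * (ε * (1 - v s)))
          = ∫ s in (0:ℝ)..t, (ε * Fd q j s - ε * (Fd q j s * v s)) := by
            apply intervalIntegral.integral_congr; intro s _; ring
        _ = (∫ s in (0:ℝ)..t, ε * Fd q j s) - ∫ s in (0:ℝ)..t, ε * (Fd q j s * v s) :=
            intervalIntegral.integral_sub
              ((continuous_const.mul hwdc).intervalIntegrable _ _)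
              ((continuous_const.mul hIBc).intervalIntegrable _ _)
        _ = ε * (w t) - ε * IB := by
            rw [intervalIntegral.integral_const_mul, intervalIntegral.integral_const_mul, hFTC]
        _ = ε * (w t - IB) := by ring
    have hecont : Continuous (fun s => Fd q j s * (ε * (1 - v s))) := by
      apply hwdc.mul
      exact continuous_const.mul (continuous_const.sub hvc)
    have hd1 : IB - IA ≤ ε * (w t - IB) := by
      rw [← heval, hIBdef, hIAdef, ← intervalIntegral.integral_sub
        (hIBc.intervalIntegrable _ _) (hIAc.intervalIntegrable _ _)]
      apply intervalIntegral.integral_mono_on ht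
        ((hIBc.sub hIAc).intervalIntegrable _ _) (hecont.intervalIntegrable _ _)
      intro s hs
      have hk := abs_le.mp (hkey s hs)
      have hf := hFdnn s hs.1
      calc Fd q j s * v s - Fd q j s * vh s = Fd q j s * (v s - vh s) := by ring
        _ ≤ Fd q j s * (ε * (1 - v s)) :=
            mul_le_mul_of_nonneg_left (by linarith [hk.1]) hf
    have hd2 : IA - IB ≤ ε * (w t - IB) := by
      rw [← heval, hIBdef, hIAdef, ← intervalIntegral.integral_sub
        (hIAc.intervalIntegrable _ _) (hIBc.intervalIntegrable _ _)]
      apply intervalIntegral.integral_mono_on ht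
        ((hIAc.sub hIBc).intervalIntegrable _ _) (hecont.intervalIntegrable _ _)
      intro s hs
      have hk := abs_le.mp (hkey s hs)
      have hf := hFdnn s hs.1
      calc Fd q j s * vh s - Fd q j s * v s = Fd q j s * (vh s - v s) := by ring
        _ ≤ Fd q j s * (ε * (1 - v s)) :=
            mul_le_mul_of_nonneg_left (by linarith [hk.2]) hf
    have hAup : A ≤ (1 + ε) * B := by rw [hpartsA, hpartsB] at *; linarith
    have hAlo : (1 - ε) * B ≤ A := by rw [hpartsA, hpartsB] at *; linarith
    -- use the inductive hypothesis
    have hqvnn : ∀ s, s ∈ Set.Icc (0:ℝ) t → 0 ≤ vh s * qh s := by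
      intro s hs
      exact mul_nonneg (le_of_lt (Real.exp_pos _)) (hqhpos (j+1) le_rfl s hs.1)
    have hup2 : Ff qhat (j+1) t ≤ (1 + ε) ^ (j+1) * A := by
      rw [hrepAh, hAdef, ← intervalIntegral.integral_const_mul]
      apply intervalIntegral.integral_mono_on ht
        ((hwhc.mul (hvhc.mul hch)).intervalIntegrable _ _)
        ((continuous_const.mul (hwc.mul (hvhc.mul hch))).intervalIntegrable _ _)
      intro s hs
      calc Ff qhat j s * (vh s * qh s) ≤ ((1 + ε) ^ (j+1) * w s) * (vh s * qh s) :=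
            mul_le_mul_of_nonneg_right (IH s hs.1).2 (hqvnn s hs)
        _ = (1 + ε) ^ (j+1) * (w s * (vh s * qh s)) := by ring
    have hlo2 : (1 - ε) ^ (j+1) * A ≤ Ff qhat (j+1) t := by
      rw [hrepAh, hAdef, ← intervalIntegral.integral_const_mul]
      apply intervalIntegral.integral_mono_on ht
        ((continuous_const.mul (hwc.mul (hvhc.mul hch))).intervalIntegrable _ _)
        ((hwhc.mul (hvhc.mul hch)).intervalIntegrable _ _)
      intro s hs
      calc (1 - ε) ^ (j+1) * (w s * (vh s * qh s))
          = ((1 - ε) ^ (j+1) * w s) * (vh s * qh s) := by ring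
        _ ≤ Ff qhat j s * (vh s * qh s) :=
            mul_le_mul_of_nonneg_right (IH s hs.1).1 (hqvnn s hs)
    have hpow1 : (0:ℝ) ≤ (1 - ε) ^ (j+1) := pow_nonneg (by linarith) _
    have hpow2 : (0:ℝ) ≤ (1 + ε) ^ (j+1) := pow_nonneg (by linarith) _
    constructor
    · rw [hrepB]
      calc (1 - ε) ^ (j+1+1) * B = (1 - ε) ^ (j+1) * ((1 - ε) * B) := by ring
        _ ≤ (1 - ε) ^ (j+1) * A := mul_le_mul_of_nonneg_left hAlo hpow1
        _ ≤ Ff qhat (j+1) t := hlo2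
    · rw [hrepB]
      calc Ff qhat (j+1) t ≤ (1 + ε) ^ (j+1) * A := hup2
        _ ≤ (1 + ε) ^ (j+1) * ((1 + ε) * B) := mul_le_mul_of_nonneg_left hAup hpow2
        _ = (1 + ε) ^ (j+1+1) * B := by ring


section rhoLink

variable {K : ℕ} {g : ℕ → ℝ → ℝ}

lemma rho_succ_eq (hne : j + 1 ≠ K) (t : ℝ) :
    rho K g (j+1) t =
      ∫ s in (0:ℝ)..t, rho K g j s * g j s * Real.exp (-(∫ u in s..t, g (j+1) u)) := by
  simp [rho, hne]

lemma rho_top_eq (heq : j + 1 = K) (t : ℝ) :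
    rho K g (j+1) t = ∫ s in (0:ℝ)..t, rho K g j s * g j s := by
  simp [rho, heq]

/-- Master link between `rho` and `Ff`. -/
lemma rho_main (hg : ∀ k, k < K → Continuous (g k)) :
    ∀ j, j < K → Continuous (rho K g j) ∧
      (∀ t, (∫ s in (0:ℝ)..t, rho K g j s * g j s) = Ff g j t) ∧
      (j ≠ 0 → ∀ t, rho K g j t = Ff g (j-1) t - Ff g j t) := by
  intro j
  induction j with
  | zero =>
    intro hj
    have hc0 := hg 0 hj
    have hrc : Continuous (rho K g 0) := by
      show Continuous fun t => Real.exp (-(∫ s in (0:ℝ)..t, g 0 s))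
      have : Continuous (Qi (g 0)) := Qi_continuous hc0
      exact Real.continuous_exp.comp this.neg
    refine ⟨hrc, ?_, by simp⟩
    have hψc : Continuous (fun s => rho K g 0 s * g 0 s) := hrc.mul hc0
    apply funeq_of_deriv (f' := Fd g 0)
    · intro t
      have h := intervalIntegral.integral_hasDerivAt_right
        (hψc.intervalIntegrable 0 t) (hψc.stronglyMeasurableAtFilter _ _) hψc.continuousAt
      refine h.congr_deriv (Eq.symm ?_)
      show g 0 t * Real.exp (-(Qi (g 0) t)) = rho K g 0 t * g 0 t
      show g 0 t * Real.exp (-(Qi (g 0) t)) = Real.exp (-(∫ s in (0:ℝ)..t, g 0 s)) * g 0 t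
      rw [show (∫ s in (0:ℝ)..t, g 0 s) = Qi (g 0) t from rfl]
      ring
    · exact (Ff_struct g 0 (fun k hk => by rw [Nat.le_zero.mp hk] at *; exact hc0)).2.2.1
    · simp [Ff, Qi, rho]
  | succ j ih =>
    intro hj
    have hj' : j < K := lt_trans (Nat.lt_succ_self j) hj
    have hne : j + 1 ≠ K := Nat.ne_of_lt hj
    obtain ⟨hrc, hG, _⟩ := ih hj'
    have hcj := hg j hj'
    have hcj1 := hg (j+1) hj
    have hgle : ∀ k, k ≤ j → Continuous (g k) := fun k hk => hg k (lt_of_le_of_lt hk hj')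
    have hgle1 : ∀ k, k ≤ j + 1 → Continuous (g k) :=
      fun k hk => hg k (lt_of_le_of_lt hk hj)
    obtain ⟨hFjc, hFj0, hFjd, hFjdc⟩ := Ff_struct g j hgle
    obtain ⟨hF1c, hF10, hF1d, hF1dc⟩ := Ff_struct g (j+1) hgle1
    set Q := Qi (g (j+1)) with hQ
    set ψ : ℝ → ℝ := fun s => rho K g j s * g j s * Real.exp (Q s) with hψ
    have hψc : Continuous ψ := by
      apply (hrc.mul hcj).mul
      exact Real.continuous_exp.comp (Qi_continuous hcj1)
    set P : ℝ → ℝ := fun t => ∫ s in (0:ℝ)..t, ψ s with hP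
    have hPd : ∀ t, HasDerivAt P (ψ t) t := fun t =>
      intervalIntegral.integral_hasDerivAt_right (hψc.intervalIntegrable _ _)
        (hψc.stronglyMeasurableAtFilter _ _) hψc.continuousAt
    have hre : ∀ t, rho K g (j+1) t = P t * Real.exp (-(Q t)) := by
      intro t
      rw [rho_succ_eq hne t, ← intervalIntegral.integral_mul_const]
      apply intervalIntegral.integral_congr
      intro s _
      beta_reduce
      rw [integral_eq_Qi_sub hcj1,
        show -(Qi (g (j+1)) t - Qi (g (j+1)) s) = Qi (g (j+1)) s + -(Qi (g (j+1)) t) by ring,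
        Real.exp_add]
      ring
    have hrc1 : Continuous (rho K g (j+1)) := by
      rw [funext hre]
      apply Continuous.mul
      · exact continuous_iff_continuousAt.2 fun t => (hPd t).differentiableAt.continuousAt
      · exact Real.continuous_exp.comp (Qi_continuous hcj1).neg
    -- derivative of G j equals Fd g j
    have hGd : ∀ t, HasDerivAt (Ff g j) (rho K g j t * g j t) t := by
      intro t
      have hc : Continuous (fun s => rho K g j s * g j s) := hrc.mul hcj
      have h := intervalIntegral.integral_hasDerivAt_right
        (hc.intervalIntegrable 0 t) (hc.stronglyMeasurableAtFilter _ _) hc.continuousAt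
      have heqf : (fun u => ∫ s in (0:ℝ)..u, rho K g j s * g j s) = Ff g j := funext hG
      rwa [heqf] at h
    have hdd : ∀ t, rho K g j t * g j t = Fd g j t := fun t => (hGd t).unique (hFjd t)
    -- R1 : rho (j+1) = Ff j - Ff (j+1), via the e^Q trick
    have hR1 : ∀ t, rho K g (j+1) t = Ff g j t - Ff g (j+1) t := by
      intro t
      have hX : ∀ u, HasDerivAt (fun u => Real.exp (Q u) * rho K g (j+1) u)
          (Real.exp (Q u) * Fd g j u) u := by
        intro u
        have : (fun u => Real.exp (Q u) * rho K g (j+1) u) = fun u =>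
            Real.exp (Q u) * (P u * Real.exp (-(Q u))) := by
          funext u; rw [hre u]
        rw [this]
        have h1 : HasDerivAt (fun u => Real.exp (Q u)) (Real.exp (Q u) * g (j+1) u) u :=
          (Qi_hasDerivAt hcj1 u).exp
        have h2 : HasDerivAt (fun u => Real.exp (-(Q u)))
            (Real.exp (-(Q u)) * (-(g (j+1) u))) u := (Qi_hasDerivAt hcj1 u).neg.exp
        have h3 := h1.mul ((hPd u).mul h2)
        refine h3.congr_deriv (Eq.symm ?_)
        have hee : Real.exp (Q u) * Real.exp (-(Q u)) = 1 := by rw [← Real.exp_add]; simp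
        rw [← hdd u]
        simp only [hψ, Pi.mul_apply]
        linear_combination (-(rho K g j u * g j u * Real.exp (Q u))) * hee
      have hY : ∀ u, HasDerivAt (fun u => Real.exp (Q u) * (Ff g j u - Ff g (j+1) u))
          (Real.exp (Q u) * Fd g j u) u := by
        intro u
        have h1 : HasDerivAt (fun u => Real.exp (Q u)) (Real.exp (Q u) * g (j+1) u) u :=
          (Qi_hasDerivAt hcj1 u).exp
        have h3 := h1.mul ((hFjd u).sub (hF1d u))
        refine h3.congr_deriv (Eq.symm ?_)
        simp only [Fd, Pi.sub_apply]
        ring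
      have h0 : Real.exp (Q 0) * rho K g (j+1) 0 = Real.exp (Q 0) * (Ff g j 0 - Ff g (j+1) 0) := by
        rw [hre 0, hFj0, hF10]
        simp [hP]
      have := funeq_of_deriv hX hY h0 t
      exact mul_left_cancel₀ (Real.exp_ne_zero _) this
    refine ⟨hrc1, ?_, fun _ t => hR1 t⟩
    -- G (j+1) = Ff (j+1)
    have hψ1c : Continuous (fun s => rho K g (j+1) s * g (j+1) s) := hrc1.mul hcj1
    apply funeq_of_deriv (f' := Fd g (j+1))
    · intro t
      have h := intervalIntegral.integral_hasDerivAt_right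
        (hψ1c.intervalIntegrable 0 t) (hψ1c.stronglyMeasurableAtFilter _ _) hψ1c.continuousAt
      refine h.congr_deriv (Eq.symm ?_)
      show Fd g (j+1) t = rho K g (j+1) t * g (j+1) t
      rw [hR1 t]
      simp only [Fd]
      ring
    · exact hF1d
    · rw [hF10]
      simp

end rhoLink

lemma influence_eq {K : ℕ} {g : ℕ → ℝ → ℝ} (hg : ∀ k, k < K → Continuous (g k))
    (hK : 1 ≤ K) (t : ℝ) :
    influence K g t = ∑ j ∈ Finset.range K, Ff g j t := by
  obtain ⟨M, rfl⟩ : ∃ M, K = M + 1 := ⟨K - 1, (Nat.succ_pred_eq_of_pos hK).symm⟩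
  have hpart : ∀ m, m ≤ M →
      (∑ k ∈ Finset.range (m+1), (k : ℝ) * rho (M+1) g k t)
        = (∑ j ∈ Finset.range m, Ff g j t) - m * Ff g m t := by
    intro m
    induction m with
    | zero => simp
    | succ m ihm =>
      intro hm
      have hm' : m ≤ M := le_trans (Nat.le_succ m) hm
      have hρ := (rho_main hg (m+1) (by omega)).2.2 (Nat.succ_ne_zero m) t
      simp only [Nat.add_sub_cancel] at hρ
      rw [Finset.sum_range_succ, ihm hm', hρ, Finset.sum_range_succ]
      push_cast
      ring
  have htop : rho (M+1) g (M+1) t = Ff g M t := by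
    rw [rho_top_eq rfl t]
    exact (rho_main hg M (by omega)).2.1 t
  show (∑ k ∈ Finset.range (M+1+1), (k : ℝ) * rho (M+1) g k t) = _
  rw [Finset.sum_range_succ, hpart M le_rfl, htop, Finset.sum_range_succ]
  push_cast
  ring

lemma Ff0_pos {g : ℕ → ℝ → ℝ} (hc : Continuous (g 0))
    (hpos : ∀ u, 0 ≤ u → 0 < g 0 u) {t : ℝ} (ht : 0 < t) : 0 < Ff g 0 t := by
  have hQ : 0 < Qi (g 0) t := by
    apply intervalIntegral.intervalIntegral_pos_of_pos_on (hc.intervalIntegrable 0 t)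
      (fun u hu => hpos u (le_of_lt hu.1)) ht
  have : Real.exp (-(Qi (g 0) t)) < 1 := Real.exp_lt_one_iff.mpr (by linarith)
  show 0 < 1 - Real.exp (-(Qi (g 0) t))
  linarith

lemma two_le_pow_add_pow {ε : ℝ} (h0 : 0 ≤ ε) (h1 : ε ≤ 1) :
    ∀ n : ℕ, 2 ≤ (1-ε)^n + (1+ε)^n
  | 0 => by norm_num
  | (n+1) => by
    have ih := two_le_pow_add_pow h0 h1 n
    have hp : (1-ε)^n ≤ (1+ε)^n := pow_le_pow_left₀ (by linarith) (by linarith) n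
    rw [pow_succ, pow_succ]
    nlinarith
end InfluenceAux

open InfluenceAux

/-- Influence error, multiplicative bound: under the relative rate error bound
`δ_k(t) ≤ min{log(1+ε/2)/(q̄_k t), ε/(2+ε)}` for every `k`, the influences satisfy
`(1-ε)^K ≤ μ̂(t)/μ(t) ≤ (1+ε)^K` and `|μ̂(t) - μ(t)|/μ(t) ≤ (1+ε)^K - 1` for `t > 0`. -/
theorem influence_multiplicative_bound (K : ℕ) (hK : 1 ≤ K)
    (q qhat : ℕ → ℝ → ℝ)
    (hq : ∀ k, k < K → Continuous (q k)) (hqhat : ∀ k, k < K → Continuous (qhat k))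
    (hqpos : ∀ k, k < K → ∀ t : ℝ, 0 ≤ t → 0 < q k t)
    (hqhatpos : ∀ k, k < K → ∀ t : ℝ, 0 ≤ t → 0 < qhat k t)
    (ε : ℝ) (hε : 0 < ε) (hε1 : ε < 1)
    (qbar : ℕ → ℝ) (hqbar : ∀ k, k < K → 0 < qbar k)
    (hqle : ∀ k, k < K → ∀ t : ℝ, 0 ≤ t → q k t ≤ qbar k)
    (hdelta : ∀ k, k < K → ∀ t : ℝ, 0 < t →
      |qhat k t - q k t| / q k t ≤
        min (Real.log (1 + ε / 2) / (qbar k * t)) (ε / (2 + ε))) :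
    ∀ t : ℝ, 0 < t →
      (1 - ε) ^ K ≤ influence K qhat t / influence K q t ∧
      influence K qhat t / influence K q t ≤ (1 + ε) ^ K ∧
      |influence K qhat t - influence K q t| / influence K q t ≤ (1 + ε) ^ K - 1 := by
  intro t ht
  have habs : ∀ k, k < K → ∀ u, 0 ≤ u → |qhat k u - q k u| ≤ ε / (2 + ε) * q k u := by
    intro k hk
    have hb : ∀ u, 0 < u → |qhat k u - q k u| ≤ ε / (2 + ε) * q k u := by
      intro u hu
      have h2 : |qhat k u - q k u| / q k u ≤ ε / (2 + ε) :=
        le_trans (hdelta k hk u hu) (min_le_right _ _)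
      have hqp := hqpos k hk u (le_of_lt hu)
      calc |qhat k u - q k u| = |qhat k u - q k u| / q k u * q k u := by field_simp
        _ ≤ ε / (2 + ε) * q k u := mul_le_mul_of_nonneg_right h2 (le_of_lt hqp)
    intro u hu
    rcases eq_or_lt_of_le hu with heq | hu'
    · subst heq
      have hfc : Filter.Tendsto (fun u => |qhat k u - q k u|) (nhdsWithin 0 (Set.Ioi 0))
          (nhds (|qhat k 0 - q k 0|)) :=
        (((hqhat k hk).sub (hq k hk)).abs.continuousAt (x := 0)).continuousWithinAt
      have hgc : Filter.Tendsto (fun u => ε / (2 + ε) * q k u) (nhdsWithin 0 (Set.Ioi 0))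
          (nhds (ε / (2 + ε) * q k 0)) :=
        ((continuous_const.mul (hq k hk)).continuousAt (x := 0)).continuousWithinAt
      exact le_of_tendsto_of_tendsto hfc hgc
        (eventually_mem_nhdsWithin.mono fun u hu => hb u hu)
    · exact hb u hu'
  have hqnn : ∀ k, k < K → ∀ u : ℝ, 0 ≤ u → 0 ≤ q k u :=
    fun k hk u hu => le_of_lt (hqpos k hk u hu)
  have hqhnn : ∀ k, k < K → ∀ u : ℝ, 0 ≤ u → 0 ≤ qhat k u :=
    fun k hk u hu => le_of_lt (hqhatpos k hk u hu)
  have hcomp : ∀ j, j < K →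
      (1 - ε) ^ (j+1) * Ff q j t ≤ Ff qhat j t ∧
        Ff qhat j t ≤ (1 + ε) ^ (j+1) * Ff q j t := by
    intro j hj
    exact comparison ε hε hε1 q qhat j
      (fun k hk => hq k (lt_of_le_of_lt hk hj))
      (fun k hk => hqhat k (lt_of_le_of_lt hk hj))
      (fun k hk => hqnn k (lt_of_le_of_lt hk hj))
      (fun k hk => hqhnn k (lt_of_le_of_lt hk hj))
      (fun k hk => habs k (lt_of_le_of_lt hk hj))
      t (le_of_lt ht)
  have hFnn : ∀ j, j < K → 0 ≤ Ff q j t := by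
    intro j hj
    exact Ff_nonneg q j (fun k hk => hq k (lt_of_le_of_lt hk hj))
      (fun k hk => hqnn k (lt_of_le_of_lt hk hj)) t (le_of_lt ht)
  have hIq : influence K q t = ∑ j ∈ Finset.range K, Ff q j t := influence_eq hq hK t
  have hIqh : influence K qhat t = ∑ j ∈ Finset.range K, Ff qhat j t :=
    influence_eq hqhat hK t
  have hK0 : 0 < K := hK
  have hμpos : 0 < influence K q t := by
    rw [hIq]
    have h0 : 0 < Ff q 0 t := Ff0_pos (hq 0 hK0) (fun u hu => hqpos 0 hK0 u hu) ht
    have := Finset.single_le_sum (f := fun j => Ff q j t)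
      (fun j hj => hFnn j (Finset.mem_range.mp hj)) (Finset.mem_range.mpr hK0)
    linarith
  have hub : influence K qhat t ≤ (1 + ε) ^ K * influence K q t := by
    rw [hIq, hIqh, Finset.mul_sum]
    apply Finset.sum_le_sum
    intro j hj
    have hjK := Finset.mem_range.mp hj
    calc Ff qhat j t ≤ (1 + ε) ^ (j+1) * Ff q j t := (hcomp j hjK).2
      _ ≤ (1 + ε) ^ K * Ff q j t :=
        mul_le_mul_of_nonneg_right (pow_le_pow_right₀ (by linarith) hjK) (hFnn j hjK)
  have hlb : (1 - ε) ^ K * influence K q t ≤ influence K qhat t := by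
    rw [hIq, hIqh, Finset.mul_sum]
    apply Finset.sum_le_sum
    intro j hj
    have hjK := Finset.mem_range.mp hj
    calc (1 - ε) ^ K * Ff q j t ≤ (1 - ε) ^ (j+1) * Ff q j t :=
        mul_le_mul_of_nonneg_right
          (pow_le_pow_of_le_one (by linarith) (by linarith) hjK) (hFnn j hjK)
      _ ≤ Ff qhat j t := (hcomp j hjK).1
  have h2le : 2 ≤ (1 - ε) ^ K + (1 + ε) ^ K :=
    two_le_pow_add_pow (le_of_lt hε) (le_of_lt hε1) K
  refine ⟨?_, ?_, ?_⟩
  · exact (le_div_iff₀ hμpos).mpr hlb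
  · exact (div_le_iff₀ hμpos).mpr hub
  · rw [div_le_iff₀ hμpos]
    apply abs_le.mpr
    constructor
    · nlinarith
    · nlinarith
end
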